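/- Let Γ be a directed graph in which the out-neighbors k_1,...,k_d of node i admit d pairwise vertex-disjoint directed paths to d distinct measured nodes j_1,...,j_d. Then there exists a choice of matrix Ḡ consistent with Γ (namely the 0/1 indicator of the edges on those paths) such that (I−Ḡ) is invertible and the d×d matrix with (a,b) entry [(I−Ḡ)^{-1}]_{j_a k_b} is a permutation matrix, hence invertible. -/

import Mathlib

section Stmt15Aux

variable {n d : ℕ}

/-- Uniqueness of position: a vertex occurs in at most one path, at one index. -/
lemma stmt15_at_uniq {p : Fin d → List (Fin n)}
    (hnodup : ∀ a, (p a).Nodup)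
    (hdisj : ∀ a b, a ≠ b → ∀ v, v ∈ p a → v ∉ p b)
    {a b : Fin d} {s t : ℕ} {x : Fin n}
    (ha : (p a)[s]? = some x) (hb : (p b)[t]? = some x) : a = b ∧ s = t := by
  have hma : x ∈ p a := List.mem_of_getElem? ha
  have hmb : x ∈ p b := List.mem_of_getElem? hb
  have hab : a = b := by
    by_contra h
    exact hdisj a b h x hma hmb
  subst hab
  obtain ⟨hs, ha'⟩ := List.getElem?_eq_some_iff.mp ha
  obtain ⟨ht, hb'⟩ := List.getElem?_eq_some_iff.mp hb
  exact ⟨rfl, ((hnodup a).getElem_inj_iff).mp (ha'.trans hb'.symm)⟩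

/-- Translation between the decomposition form and the index form of "edge". -/
lemma stmt15_decomp_iff {α : Type*} (l : List α) (x y : α) :
    (∃ l1 l2, l = l1 ++ y :: x :: l2) ↔ ∃ s, l[s]? = some y ∧ l[s + 1]? = some x := by
  constructor
  · rintro ⟨l1, l2, rfl⟩
    refine ⟨l1.length, ?_, ?_⟩
    · rw [List.getElem?_append_right le_rfl]
      simp
    · rw [List.getElem?_append_right (Nat.le_succ _)]
      simp
  · rintro ⟨s, hy, hx⟩
    obtain ⟨hs1, hx'⟩ := List.getElem?_eq_some_iff.mp hx
    obtain ⟨hs0, hy'⟩ := List.getElem?_eq_some_iff.mp hy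
    refine ⟨l.take s, l.drop (s + 2), ?_⟩
    have h1 : l.drop s = y :: x :: l.drop (s + 2) := by
      rw [List.drop_eq_getElem_cons hs0, List.drop_eq_getElem_cons hs1, hx', hy']
    conv_lhs => rw [← List.take_append_drop s l, h1]

end Stmt15Aux

/-- If the out-neighbors `k 1, …, k d` of node `i` admit pairwise vertex-disjoint
directed paths to distinct measured nodes `j 1, …, j d`, then the 0/1 indicator
matrix `Ḡ` of the edges of these paths is consistent with the graph, `I - Ḡ` is
invertible, and the `d × d` matrix `[(I-Ḡ)⁻¹]_{j_a k_b}` is a permutation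
matrix, hence invertible. -/
theorem stmt15 {n d : ℕ} {F : Type*} [Field F]
    (E : Fin n → Fin n → Prop) (i : Fin n)
    (k j : Fin d → Fin n)
    (hk : ∀ a, E i (k a))
    (p : Fin d → List (Fin n))
    (hne : ∀ a, p a ≠ [])
    (hchain : ∀ a, (p a).Chain' E)
    (hhead : ∀ a, (p a).head? = some (k a))
    (hlast : ∀ a, (p a).getLast? = some (j a))
    (hnodup : ∀ a, (p a).Nodup)
    (hdisj : ∀ a b, a ≠ b → ∀ v, v ∈ p a → v ∉ p b) :
    ∃ Gbar : Matrix (Fin n) (Fin n) F,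
      (∀ x y, ((∃ a l1 l2, p a = l1 ++ y :: x :: l2) → Gbar x y = 1) ∧
              (¬ (∃ a l1 l2, p a = l1 ++ y :: x :: l2) → Gbar x y = 0)) ∧
      (∀ x y, Gbar x y ≠ 0 → E y x) ∧
      IsUnit (1 - Gbar).det ∧
      ∃ σ : Equiv.Perm (Fin d),
        (∀ a b, (1 - Gbar)⁻¹ (j a) (k b) = if σ a = b then 1 else 0) ∧
        IsUnit (Matrix.of fun a b : Fin d => (1 - Gbar)⁻¹ (j a) (k b)).det := by
  classical
  -- the indicator matrix of the edges
  set G : Matrix (Fin n) (Fin n) F :=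
    Matrix.of (fun x y : Fin n => if ∃ a l1 l2, p a = l1 ++ y :: x :: l2 then (1 : F) else 0) with hGdef
  have hGapp : ∀ x y, G x y = if ∃ a s, (p a)[s]? = some y ∧ (p a)[s + 1]? = some x
      then (1 : F) else 0 := by
    intro x y
    simp only [hGdef, Matrix.of_apply]
    congr 1
    simp only [eq_iff_iff]
    constructor
    · rintro ⟨a, l1, l2, h⟩
      obtain ⟨s, hs⟩ := (stmt15_decomp_iff (p a) x y).mp ⟨l1, l2, h⟩
      exact ⟨a, s, hs⟩
    · rintro ⟨a, s, hs⟩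
      obtain ⟨l1, l2, h⟩ := (stmt15_decomp_iff (p a) x y).mpr ⟨s, hs⟩
      exact ⟨a, l1, l2, h⟩
  have hGapp2 : ∀ x y, G x y = if ∃ a l1 l2, p a = l1 ++ y :: x :: l2 then (1 : F) else 0 := by
    intro x y; rw [hGdef]; rfl
  -- the explicit inverse of 1 - G
  set A : Matrix (Fin n) (Fin n) F :=
    Matrix.of (fun x y : Fin n => if x = y ∨ (∃ (a : Fin d) (s t : ℕ), t < s ∧ (p a)[t]? = some y ∧ (p a)[s]? = some x)
      then (1 : F) else 0) with hAdef
  have hAapp : ∀ x y, A x y = if x = y ∨ (∃ (a : Fin d) (s t : ℕ), t < s ∧ (p a)[t]? = some y ∧ (p a)[s]? = some x)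
      then (1 : F) else 0 := by
    intro x y; rw [hAdef]; rfl
  -- key computation : (1 - G) * A = 1
  have key : (1 - G) * A = 1 := by
    rw [sub_mul, Matrix.one_mul]
    ext x y
    simp only [Matrix.sub_apply, Matrix.mul_apply, Matrix.one_apply]
    by_cases hpred : ∃ z a s, (p a)[s]? = some z ∧ (p a)[s + 1]? = some x
    · obtain ⟨z₀, a, s, hz₀, hx⟩ := hpred
      have hsum : ∑ z, G x z * A z y = A z₀ y := by
        rw [Finset.sum_eq_single z₀]
        · rw [hGapp, if_pos ⟨a, s, hz₀, hx⟩, one_mul]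
        · intro z _ hz
          rw [hGapp, if_neg, zero_mul]
          rintro ⟨b, t, hzb, hxb⟩
          obtain ⟨hba, hst⟩ := stmt15_at_uniq hnodup hdisj hxb hx
          rw [hba] at hzb
          have hts : t = s := by omega
          rw [hts] at hzb
          exact hz (Option.some_injective _ (hzb.symm.trans hz₀))
        · intro h
          exact absurd (Finset.mem_univ z₀) h
      rw [hsum]
      by_cases hxy : x = y
      · subst hxy
        rw [if_pos rfl]
        have h1 : A x x = 1 := by
          rw [hAapp, if_pos (Or.inl rfl)]
        have h2 : A z₀ x = 0 := by
          rw [hAapp, if_neg]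
          rintro (heq | ⟨b, s', t', hlt, hxb, hzb⟩)
          · rw [heq] at hz₀
            obtain ⟨_, hst⟩ := stmt15_at_uniq hnodup hdisj hz₀ hx
            omega
          · obtain ⟨hba, ht'⟩ := stmt15_at_uniq hnodup hdisj hxb hx
            rw [hba] at hzb
            obtain ⟨_, hs'⟩ := stmt15_at_uniq hnodup hdisj hzb hz₀
            omega
        rw [h1, h2, sub_zero]
      · rw [if_neg hxy]
        have hiff : (x = y ∨ (∃ (c : Fin d) (s' t' : ℕ), t' < s' ∧ (p c)[t']? = some y ∧ (p c)[s']? = some x))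
            ↔ (z₀ = y ∨ (∃ (c : Fin d) (s' t' : ℕ), t' < s' ∧ (p c)[t']? = some y ∧ (p c)[s']? = some z₀)) := by
          constructor
          · rintro (heq | ⟨b, s', t', hlt, hyb, hxb⟩)
            · exact absurd heq hxy
            · obtain ⟨hba, hs'⟩ := stmt15_at_uniq hnodup hdisj hxb hx
              rw [hba] at hyb
              rcases Nat.lt_or_ge t' s with h | h
              · exact Or.inr ⟨a, s, t', h, hyb, hz₀⟩
              · have hts : t' = s := by omega
                rw [hts] at hyb
                exact Or.inl (Option.some_injective _ (hz₀.symm.trans hyb))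
          · rintro (heq | ⟨b, s', t', hlt, hyb, hzb⟩)
            · rw [heq] at hz₀
              exact Or.inr ⟨a, s + 1, s, Nat.lt_succ_self s, hz₀, hx⟩
            · obtain ⟨hba, hs'⟩ := stmt15_at_uniq hnodup hdisj hzb hz₀
              rw [hba] at hyb
              exact Or.inr ⟨a, s + 1, t', by omega, hyb, hx⟩
        rw [hAapp, hAapp, if_congr hiff rfl rfl, sub_self]
    · have hsum : ∑ z, G x z * A z y = 0 := by
        apply Finset.sum_eq_zero
        intro z _
        rw [hGapp, if_neg, zero_mul]
        rintro ⟨a, s, hz, hx⟩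
        exact hpred ⟨z, a, s, hz, hx⟩
      rw [hsum, sub_zero]
      by_cases hxy : x = y
      · subst hxy
        rw [if_pos rfl, hAapp, if_pos (Or.inl rfl)]
      · rw [if_neg hxy, hAapp, if_neg]
        rintro (heq | ⟨b, s', t', hlt, hyb, hxb⟩)
        · exact hxy heq
        · have hs'pos : 1 ≤ s' := by omega
          obtain ⟨hs'len, _⟩ := List.getElem?_eq_some_iff.mp hxb
          have h1 : s' - 1 < (p b).length := by omega
          refine hpred ⟨(p b)[s' - 1], b, s' - 1, ?_, ?_⟩
          · exact List.getElem?_eq_some_iff.mpr ⟨h1, rfl⟩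
          · rwa [Nat.sub_add_cancel hs'pos]
  have hdet : IsUnit (1 - G).det := Matrix.isUnit_det_of_right_inverse key
  have hinv : (1 - G)⁻¹ = A := Matrix.inv_eq_right_inv key
  -- positions of heads and lasts
  have hkpos : ∀ a, (p a)[0]? = some (k a) := by
    intro a
    rw [← List.head?_eq_getElem?]
    exact hhead a
  have hjpos : ∀ a, (p a)[(p a).length - 1]? = some (j a) := by
    intro a
    rw [← List.getLast?_eq_getElem?]
    exact hlast a
  have hjk : ∀ a b, A (j a) (k b) = if a = b then (1 : F) else 0 := by
    intro a b
    rw [hAapp]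
    by_cases hab : a = b
    · subst hab
      rw [if_pos rfl, if_pos]
      by_cases hlen : (p a).length - 1 = 0
      · left
        have := (hjpos a)
        rw [hlen, hkpos a] at this
        exact (Option.some_injective _ this).symm
      · exact Or.inr ⟨a, (p a).length - 1, 0, by omega, hkpos a, hjpos a⟩
    · rw [if_neg hab, if_neg]
      have hja : j a ∈ p a := List.mem_of_getElem? (hjpos a)
      have hkb : k b ∈ p b := List.mem_of_getElem? (hkpos b)
      rintro (heq | ⟨c, s', t', hlt, hyb, hxb⟩)
      · rw [heq] at hja
        exact hdisj b a (Ne.symm hab) (k b) hkb hja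
      · have hca : c = a := (stmt15_at_uniq hnodup hdisj hxb (hjpos a)).1
        subst hca
        have hkbc : k b ∈ p c := List.mem_of_getElem? hyb
        exact hdisj c b hab (k b) hkbc hkb
  refine ⟨G, ?_, ?_, hdet, Equiv.refl _, ?_, ?_⟩
  · intro x y
    constructor
    · intro h
      rw [hGapp2, if_pos h]
    · intro h
      rw [hGapp2, if_neg h]
  · intro x y hxy
    have h : ∃ a l1 l2, p a = l1 ++ y :: x :: l2 := by
      by_contra h
      apply hxy
      rw [hGapp2, if_neg h]
    obtain ⟨a, l1, l2, h⟩ := h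
    have hc : List.Chain' E [y, x] := by
      refine (hchain a).infix ?_
      exact ⟨l1, l2, by rw [h]; simp⟩
    exact (List.isChain_cons_cons.mp hc).1
  · intro a b
    rw [hinv, hjk, Equiv.refl_apply]
  · have : (Matrix.of fun a b : Fin d => (1 - G)⁻¹ (j a) (k b)) = 1 := by
      ext a b
      rw [Matrix.of_apply, hinv, hjk, Matrix.one_apply]
    rw [this, Matrix.det_one]
    exact isUnit_one
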